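/- For all infinite sets A and B, ⟨[A]^{<ω}, ⊆⟩ ≤_T ⟨[B]^{<ω}, ⊆⟩ if and only if the cardinality of A is at most the cardinality of B. -/

import Mathlib

open Cardinal

/-- A subset `S` of a quasiorder `⟨α, r⟩` is bounded if it has an upper bound. -/
def TBounded {α : Type*} (r : α → α → Prop) (S : Set α) : Prop :=
  ∃ b, ∀ x ∈ S, r x b

/-- A subset `C` of `⟨α, r⟩` is cofinal if every element lies below a member of `C`. -/
def TCofinal {α : Type*} (r : α → α → Prop) (C : Set α) : Prop :=
  ∀ x, ∃ c ∈ C, r x c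

/-- A Tukey map: the image of every unbounded set is unbounded. -/
def IsTukeyMap {α β : Type*} (ra : α → α → Prop) (rb : β → β → Prop) (f : α → β) : Prop :=
  ∀ S : Set α, ¬ TBounded ra S → ¬ TBounded rb (f '' S)

/-- Tukey reducibility `P ≤_T Q`: there is a Tukey map from `P` to `Q`. -/
def TukeyLE {α β : Type*} (ra : α → α → Prop) (rb : β → β → Prop) : Prop :=
  ∃ f : α → β, IsTukeyMap ra rb f

/-- Tukey equivalence `P ≡_T Q`. -/
def TukeyEquiv {α β : Type*} (ra : α → α → Prop) (rb : β → β → Prop) : Prop :=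
  TukeyLE ra rb ∧ TukeyLE rb ra

/-- Strict Tukey reducibility `P <_T Q`. -/
def TukeyLT {α β : Type*} (ra : α → α → Prop) (rb : β → β → Prop) : Prop :=
  TukeyLE ra rb ∧ ¬ TukeyLE rb ra

/-- A directed set: a preorder in which every finite subset (in particular `∅` and pairs)
has an upper bound; equivalently, a nonempty directed preorder. -/
structure IsDirectedSet {α : Type*} (r : α → α → Prop) : Prop where
  nonempty : Nonempty α
  refl : ∀ x, r x x
  trans : ∀ {x y z}, r x y → r y z → r x z
  directed : ∀ x y, ∃ z, r x z ∧ r y z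

/-- For infinite sets `A, B`: `[A]^{<ω} ≤_T [B]^{<ω}` iff `|A| ≤ |B|`. -/
theorem stmt5 (A B : Type) [Infinite A] [Infinite B] :
    TukeyLE ((· ⊆ ·) : Finset A → Finset A → Prop)
        ((· ⊆ ·) : Finset B → Finset B → Prop) ↔
      #A ≤ #B := by
  constructor
  · rintro ⟨F, hF⟩
    -- the map a ↦ F {a} has finite fibers
    have hfib : ∀ c : Finset B, #((fun a : A => F {a}) ⁻¹' {c}) ≤ ℵ₀ := by
      intro c
      -- the fiber is bounded, hence finite
      have h := hF ((fun a : A => ({a} : Finset A)) '' ((fun a : A => F {a}) ⁻¹' {c}))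
      by_contra hlarge
      push_neg at hlarge
      have hnb : ¬ TBounded ((· ⊆ ·) : Finset A → Finset A → Prop)
          ((fun a : A => ({a} : Finset A)) '' ((fun a : A => F {a}) ⁻¹' {c})) := by
        rintro ⟨b, hb⟩
        have : ((fun a : A => F {a}) ⁻¹' {c}) ⊆ ↑b := by
          intro a ha
          have := hb {a} ⟨a, ha, rfl⟩
          simpa using this
        have hfin : ((fun a : A => F {a}) ⁻¹' {c}).Finite := (b.finite_toSet).subset this
        exact absurd hfin.lt_aleph0.le (by exact_mod_cast fun h => hlarge.2 h)
      have hb2 : TBounded ((· ⊆ ·) : Finset B → Finset B → Prop)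
          (F '' ((fun a : A => ({a} : Finset A)) '' ((fun a : A => F {a}) ⁻¹' {c}))) := by
        refine ⟨c, ?_⟩
        rintro x ⟨s, ⟨a, ha, rfl⟩, rfl⟩
        simp only [Set.mem_preimage, Set.mem_singleton_iff] at ha
        exact ha.le
      exact h hnb hb2
    have := Cardinal.mk_le_mk_mul_of_mk_preimage_le (fun a : A => F {a}) hfib
    calc #A ≤ #(Finset B) * ℵ₀ := this
      _ = #B * ℵ₀ := by rw [Cardinal.mk_finset_of_infinite]
      _ = #B := by
          exact Cardinal.mul_eq_left (Cardinal.aleph0_le_mk B) (Cardinal.aleph0_le_mk B) aleph0_ne_zero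
  · intro hAB
    classical
    obtain ⟨f⟩ := hAB
    refine ⟨fun s => s.image f, ?_⟩
    intro S hS hb
    obtain ⟨b, hb⟩ := hb
    apply hS
    refine ⟨b.preimage f (f.injective.injOn), ?_⟩
    intro s hs x hx
    simp only [Finset.mem_preimage]
    exact hb (s.image f) ⟨s, hs, rfl⟩ (Finset.mem_image_of_mem f hx)
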